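/- Let n ≥ 1 and let A be an n×n matrix over ZMod 2 that is upper unitriangular, i.e., A i i = 1 for all i and A i j = 0 whenever i > j. For i < j let E(i, j) := 1 + Matrix.stdBasisMatrix i j 1 (the identity matrix with an extra 1 in entry (i, j)); this is the matrix of the CNOT gate from bit j to bit i. Then A = E_{n−1} * E_{n−2} * ⋯ * E_1, where for each i the factor E_i := ∏_{j = i+1}^{n} E(i, j)^{A i j} (the factors of each E_i pairwise commute, so this inner product is well-defined). -/

import Mathlib

namespace Stmt17

/-- The CNOT (transvection) matrix `E(i, j)`: the identity with an extra `1` in entry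
`(i, j)`. -/
def E {n : ℕ} (i j : Fin n) : Matrix (Fin n) (Fin n) (ZMod 2) :=
  1 + Matrix.single i j 1

/-- The row factor `E_i := ∏_{j > i} E(i, j)^(A i j)`, the product (in increasing order
of `j`, though the factors commute) of those `E(i, j)` with `A i j = 1`. -/
def Erow {n : ℕ} (A : Matrix (Fin n) (Fin n) (ZMod 2)) (i : Fin n) :
    Matrix (Fin n) (Fin n) (ZMod 2) :=
  (((List.finRange n).filter fun j => i < j).map fun j => if A i j = 1 then E i j else 1).prod

lemma std_mul_std {n : ℕ} (i j k : Fin n) (h : j ≠ i) :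
    Matrix.single i j (1 : ZMod 2) * Matrix.single i k 1 = 0 :=
  Matrix.single_mul_single_of_ne (c := 1) i j i h 1

lemma E_comm {n : ℕ} (i j j' : Fin n) (h : i < j) (h' : i < j') :
    E i j * E i j' = E i j' * E i j := by
  simp only [E, add_mul, mul_add, one_mul, mul_one,
    std_mul_std i j j' (ne_of_gt h), std_mul_std i j' j (ne_of_gt h')]
  abel

lemma std_mul_sum {n : ℕ} (i j : Fin n) (hij : j ≠ i) (L : List (Fin n)) (f : Fin n → ZMod 2) :
    Matrix.single i j 1 *
      (L.map fun j' => f j' • Matrix.single i j' (1 : ZMod 2)).sum = 0 := by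
  induction L with
  | nil => simp
  | cons a L ih =>
    simp only [List.map_cons, List.sum_cons, mul_add, ih, add_zero, mul_smul_comm,
      std_mul_std i j a hij, smul_zero]

lemma prod_eq_one_add {n : ℕ} (A : Matrix (Fin n) (Fin n) (ZMod 2)) (i : Fin n)
    (L : List (Fin n)) (h : ∀ j ∈ L, i < j) :
    (L.map fun j => if A i j = 1 then E i j else 1).prod
      = 1 + (L.map fun j => A i j • Matrix.single i j (1 : ZMod 2)).sum := by
  induction L with
  | nil => simp
  | cons j L ih =>
    have hij : i < j := h j (List.mem_cons_self)
    have factor : (if A i j = 1 then E i j else 1)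
        = 1 + A i j • Matrix.single i j (1 : ZMod 2) := by
      rcases (by decide : ∀ a : ZMod 2, a = 0 ∨ a = 1) (A i j) with h0 | h1
      · rw [h0]; simp [h0, E]
      · rw [h1]; simp [E]
    rw [List.map_cons, List.prod_cons, ih (fun j' hj' => h j' (List.mem_cons_of_mem _ hj')),
      factor, List.map_cons, List.sum_cons]
    rw [add_mul, one_mul, mul_add, mul_one, smul_mul_assoc,
      std_mul_sum i j (ne_of_gt hij) L (fun j' => A i j'), smul_zero, add_zero]
    abel

lemma sum_apply' {n : ℕ} (A : Matrix (Fin n) (Fin n) (ZMod 2)) (i : Fin n)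
    (L : List (Fin n)) (hnd : L.Nodup) (r c : Fin n) :
    (L.map fun j => A i j • Matrix.single i j (1 : ZMod 2)).sum r c
      = if r = i ∧ c ∈ L then A i c else 0 := by
  induction L with
  | nil => simp [Matrix.zero_apply]
  | cons j L ih =>
    rw [List.map_cons, List.sum_cons]
    have hj : j ∉ L := (List.nodup_cons.mp hnd).1
    rw [Matrix.add_apply, ih (List.nodup_cons.mp hnd).2]
    have hstd : (A i j • Matrix.single i j (1 : ZMod 2)) r c
        = if i = r ∧ j = c then A i j else 0 := by
      simp [Matrix.smul_apply, Matrix.single, mul_ite]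
    rw [hstd]
    by_cases hri : r = i
    · subst hri
      by_cases hcj : c = j
      · subst hcj
        simp [hj]
      · have hjc : j ≠ c := fun h => hcj h.symm
        simp [hjc, hcj]
    · have hir : i ≠ r := fun h => hri h.symm
      simp [hri, hir]

lemma Erow_apply {n : ℕ} (A : Matrix (Fin n) (Fin n) (ZMod 2)) (i r c : Fin n) :
    Erow A i r c = (if r = c then 1 else 0) + (if r = i ∧ i < c then A i c else 0) := by
  have hmem : ∀ j ∈ (List.finRange n).filter fun j => i < j, i < j := by
    intro j hj
    simpa using (List.mem_filter.mp hj).2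
  rw [Erow, prod_eq_one_add A i _ hmem, Matrix.add_apply, Matrix.one_apply,
    sum_apply' A i _ ((List.nodup_finRange n).filter _)]
  congr 1
  simp [List.mem_filter]

/-- One step: multiplying by the row factor of row `i` fills in row `i`. -/
lemma step {n : ℕ} (A : Matrix (Fin n) (Fin n) (ZMod 2))
    (hdiag : ∀ i, A i i = 1) (hlow : ∀ i j : Fin n, j < i → A i j = 0)
    (m : ℕ) (i : Fin n) (hi : (i : ℕ) = m) :
    Erow A i * (Matrix.of fun r c : Fin n =>
        if (r : ℕ) < m then A r c else if r = c then (1 : ZMod 2) else 0)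
      = Matrix.of fun r c : Fin n =>
          if (r : ℕ) < m + 1 then A r c else if r = c then (1 : ZMod 2) else 0 := by
  ext r c
  rw [Matrix.mul_apply]
  have hterm : ∀ c' : Fin n,
      Erow A i r c' * Matrix.of (fun r c : Fin n =>
          if (r : ℕ) < m then A r c else if r = c then (1 : ZMod 2) else 0) c' c
      = (if r = c' then 1 else 0) *
          (if (c' : ℕ) < m then A c' c else if c' = c then (1 : ZMod 2) else 0)
        + (if r = i ∧ i < c' then A i c' else 0) * (if c' = c then 1 else 0) := by
    intro c'
    rw [Erow_apply, add_mul, Matrix.of_apply]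
    congr 1
    by_cases h : r = i ∧ i < c'
    · have hnm : ¬ (c' : ℕ) < m := by
        have := h.2
        rw [Fin.lt_def, hi] at this
        omega
      simp [h, hnm]
    · simp [h]
  rw [Finset.sum_congr rfl fun c' _ => hterm c', Finset.sum_add_distrib]
  have h1 : (∑ c' : Fin n, (if r = c' then (1 : ZMod 2) else 0) *
      (if (c' : ℕ) < m then A c' c else if c' = c then (1 : ZMod 2) else 0))
      = (if (r : ℕ) < m then A r c else if r = c then (1 : ZMod 2) else 0) := by
    rw [Finset.sum_eq_single r]
    · simp
    · intro b _ hb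
      have hrb : r ≠ b := fun h => hb h.symm
      simp [hrb]
    · simp
  have h2 : (∑ c' : Fin n, (if r = i ∧ i < c' then A i c' else 0) *
      (if c' = c then (1 : ZMod 2) else 0))
      = (if r = i ∧ i < c then A i c else 0) := by
    rw [Finset.sum_eq_single c]
    · simp
    · intro b _ hb
      simp [hb]
    · simp
  rw [h1, h2, Matrix.of_apply]
  by_cases hri : r = i
  · subst hri
    have hnm : ¬ (r : ℕ) < m := by omega
    have hm1 : (r : ℕ) < m + 1 := by omega
    rcases lt_trichotomy r c with hc | hc | hc
    · have hne : r ≠ c := ne_of_lt hc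
      simp [hne, hc, hnm, hm1]
    · subst hc
      have hlt : ¬ r < r := lt_irrefl r
      simp [hlt, hnm, hm1, hdiag]
    · have hne : r ≠ c := ne_of_gt hc
      have hlt : ¬ r < c := not_lt_of_gt hc
      simp [hne, hlt, hnm, hm1, hlow r c hc]
  · have hrm : (r : ℕ) ≠ m := fun h => hri (Fin.ext (h.trans hi.symm))
    simp only [hri, false_and, if_neg (fun h : r = i ∧ i < c => hri h.1), add_zero]
    by_cases h : (r : ℕ) < m
    · have : (r : ℕ) < m + 1 := by omega
      simp [h, this]
    · have : ¬ (r : ℕ) < m + 1 := by omega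
      simp [h, this]

/-- Partial products. -/
lemma key {n : ℕ} (A : Matrix (Fin n) (Fin n) (ZMod 2))
    (hdiag : ∀ i, A i i = 1) (hlow : ∀ i j : Fin n, j < i → A i j = 0) :
    ∀ m, m ≤ n →
      (((List.finRange n).reverse.drop (n - m)).map (Erow A)).prod
        = Matrix.of fun r c : Fin n =>
            if (r : ℕ) < m then A r c else if r = c then (1 : ZMod 2) else 0 := by
  intro m
  induction m with
  | zero =>
    intro _
    rw [Nat.sub_zero, List.drop_eq_nil_of_le (by simp), List.map_nil, List.prod_nil]
    ext r c
    simp [Matrix.one_apply]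
  | succ m ih =>
    intro hm
    have hm' : m ≤ n := Nat.le_of_succ_le hm
    have hidx : n - (m + 1) < (List.finRange n).reverse.length := by
      simp; omega
    rw [List.drop_eq_getElem_cons hidx]
    have hlen : n - (m + 1) + 1 = n - m := by omega
    have hget : (List.finRange n).reverse[n - (m + 1)] = (⟨m, hm⟩ : Fin n) := by
      rw [List.getElem_reverse, List.getElem_finRange]
      ext
      simp
      omega
    rw [hlen, hget, List.map_cons, List.prod_cons, ih hm']
    exact step A hdiag hlow m ⟨m, hm⟩ rfl

theorem stmt_17 (n : ℕ) (hn : 1 ≤ n) (A : Matrix (Fin n) (Fin n) (ZMod 2))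
    (hdiag : ∀ i, A i i = 1) (hlow : ∀ i j : Fin n, j < i → A i j = 0) :
    (∀ i j j' : Fin n, i < j → i < j' → E i j * E i j' = E i j' * E i j) ∧
    A = ((List.finRange n).reverse.map (Erow A)).prod := by
  refine ⟨fun i j j' h h' => E_comm i j j' h h', ?_⟩
  have hkey := key A hdiag hlow n le_rfl
  rw [Nat.sub_self, List.drop_zero] at hkey
  rw [hkey]
  ext r c
  simp [r.isLt]

end Stmt17
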